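/- Let c_k ∈ (0, π/2) be the unique zero of the degree-(4k+2) Taylor polynomial of cos at 0 in (0, π/2). Then the sequence (c_k) is strictly increasing, c_0 = √2, and c_k → π/2 as k → ∞. -/

import Mathlib

open Finset Filter Real

private lemma term_lt {x : ℝ} (hx : 0 < x) (hx2 : x ^ 2 < 6) {N : ℕ} (hN : 1 ≤ N) :
    x ^ (N + 2) / (Nat.factorial (N + 2)) < x ^ N / (Nat.factorial N) := by
  have h1 : (0:ℝ) < (Nat.factorial N : ℝ) := by exact_mod_cast N.factorial_pos
  have h2 : (0:ℝ) < (Nat.factorial (N+2) : ℝ) := by exact_mod_cast (N+2).factorial_pos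
  rw [div_lt_div_iff₀ h2 h1]
  have hf : ((Nat.factorial (N+2) : ℝ)) = ((N:ℝ)+2) * ((N:ℝ)+1) * (Nat.factorial N) := by
    rw [show N + 2 = (N+1)+1 from rfl, Nat.factorial_succ, Nat.factorial_succ]
    push_cast; ring
  rw [hf]
  have hxN : 0 < x ^ N := pow_pos hx N
  have hxx : x ^ (N + 2) = x ^ N * x ^ 2 := by ring
  have h6 : (6:ℝ) ≤ ((N:ℝ)+2) * ((N:ℝ)+1) := by
    have : (1:ℝ) ≤ (N:ℝ) := by exact_mod_cast hN
    nlinarith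
  rw [hxx]
  nlinarith [mul_pos hxN h1]

private lemma pairsum_nonneg {x : ℝ} (hx : 0 < x) (hx2 : x ^ 2 < 6) (n : ℕ) :
    0 ≤ ∑ j ∈ range (2 * n), (-1:ℝ) ^ j * x ^ (2 * j + 1) / (Nat.factorial (2 * j + 1)) := by
  induction n with
  | zero => simp
  | succ n ih =>
    rw [show 2 * (n+1) = (2*n) + 1 + 1 by ring, Finset.sum_range_succ, Finset.sum_range_succ]
    have e1 : (-1:ℝ) ^ (2*n) = 1 := by rw [pow_mul]; norm_num
    have e2 : (-1:ℝ) ^ (2*n+1) = -1 := by rw [pow_succ, pow_mul]; norm_num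
    have ht := term_lt hx hx2 (N := 2*(2*n)+1) (by omega)
    rw [show 2*(2*n)+1+2 = 2*(2*n+1)+1 by ring] at ht
    rw [e1, e2, one_mul, neg_one_mul, add_assoc, neg_div, ← sub_eq_add_neg]
    exact add_nonneg ih (sub_nonneg.2 ht.le)

private lemma sinsum_pos {x : ℝ} (hx : 0 < x) (hx2 : x ^ 2 < 6) (n : ℕ) :
    0 < ∑ j ∈ range (2 * n + 1), (-1:ℝ) ^ j * x ^ (2 * j + 1) / (Nat.factorial (2 * j + 1)) := by
  rw [Finset.sum_range_succ]
  have e1 : (-1:ℝ) ^ (2*n) = 1 := by rw [pow_mul]; norm_num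
  rw [e1, one_mul]
  have hpos : 0 < x ^ (2*(2*n)+1) / (Nat.factorial (2*(2*n)+1) : ℝ) := by positivity
  exact add_pos_of_nonneg_of_pos (pairsum_nonneg hx hx2 n) hpos

private lemma hasDerivAt_T (n : ℕ) (x : ℝ) :
    HasDerivAt (fun y : ℝ => ∑ i ∈ range (2 * n + 2), (-1:ℝ) ^ i * y ^ (2 * i) / (Nat.factorial (2 * i)))
      (-(∑ j ∈ range (2 * n + 1), (-1:ℝ) ^ j * x ^ (2 * j + 1) / (Nat.factorial (2 * j + 1)))) x := by
  have h : ∀ i : ℕ, HasDerivAt (fun y : ℝ => (-1:ℝ) ^ i * y ^ (2 * i) / (Nat.factorial (2 * i)))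
      ((-1:ℝ) ^ i * ((2*i : ℕ) * x ^ (2*i - 1)) / (Nat.factorial (2 * i))) x := by
    intro i
    exact ((hasDerivAt_pow (2*i) x).const_mul _).div_const _
  have H := HasDerivAt.fun_sum (fun i (_ : i ∈ range (2*n+2)) => h i)
  have hsum : (∑ i ∈ range (2*n+2), (-1:ℝ) ^ i * ((2*i : ℕ) * x ^ (2*i - 1)) / (Nat.factorial (2 * i)))
      = -(∑ j ∈ range (2 * n + 1), (-1:ℝ) ^ j * x ^ (2 * j + 1) / (Nat.factorial (2 * j + 1))) := by
    rw [show 2*n+2 = (2*n+1)+1 from rfl, Finset.sum_range_succ', ← Finset.sum_neg_distrib]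
    have h0 : (-1:ℝ) ^ 0 * ((2*0 : ℕ) * x ^ (2*0 - 1)) / (Nat.factorial (2 * 0)) = 0 := by
      norm_num
    rw [h0, add_zero]
    apply Finset.sum_congr rfl
    intro j _
    have hf : ((Nat.factorial (2*(j+1)) : ℝ)) = ((2*j:ℝ)+2) * (Nat.factorial (2*j+1)) := by
      rw [show 2*(j+1) = (2*j+1)+1 by ring, Nat.factorial_succ]
      push_cast; ring
    have hfp : (0:ℝ) < (Nat.factorial (2*j+1) : ℝ) := by exact_mod_cast (2*j+1).factorial_pos
    have e1 : (-1:ℝ) ^ (j+1) = -((-1:ℝ)^j) := by rw [pow_succ]; ring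
    have e2 : 2*(j+1) - 1 = 2*j+1 := by omega
    have e3 : ((2*(j+1) : ℕ) : ℝ) = (2*j:ℝ)+2 := by push_cast; ring
    rw [e1, e2, hf, e3]
    field_simp
  rw [← hsum]
  exact H

private lemma T_anti (n : ℕ) :
    StrictAntiOn (fun y : ℝ => ∑ i ∈ range (2 * n + 2), (-1:ℝ) ^ i * y ^ (2 * i) / (Nat.factorial (2 * i)))
      (Set.Icc 0 2) := by
  apply strictAntiOn_of_deriv_neg (convex_Icc 0 2)
  · apply Continuous.continuousOn
    apply continuous_finset_sum
    intro i _
    exact (continuous_const.mul (continuous_pow _)).div_const _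
  · intro x hx
    rw [interior_Icc] at hx
    rw [(hasDerivAt_T n x).deriv]
    have hx2 : x ^ 2 < 6 := by nlinarith [hx.1, hx.2]
    exact neg_neg_iff_pos.2 (sinsum_pos hx.1 hx2 n)

theorem cos_taylor_zero_seq (c : ℕ → ℝ)
    (hc : ∀ k, c k ∈ Set.Ioo 0 (Real.pi / 2) ∧
      (∑ i ∈ Finset.range (2 * k + 2), (-1 : ℝ) ^ i * (c k) ^ (2 * i) / (Nat.factorial (2 * i))) = 0) :
    StrictMono c ∧ c 0 = Real.sqrt 2 ∧
      Filter.Tendsto c Filter.atTop (nhds (Real.pi / 2)) := by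
  have hpi : Real.pi / 2 ≤ 2 := by linarith [Real.pi_le_four]
  have hmem : ∀ k, c k ∈ Set.Icc (0:ℝ) 2 := fun k =>
    ⟨(hc k).1.1.le, le_trans (hc k).1.2.le hpi⟩
  have hsq : ∀ k, (c k) ^ 2 < 6 := fun k => by
    nlinarith [(hc k).1.1, (hc k).1.2, hpi]
  constructor
  · apply strictMono_nat_of_lt_succ
    intro k
    have h0 := (hc k).2
    have h1 := (hc (k+1)).2
    have key : 0 < ∑ i ∈ range (2 * (k+1) + 2), (-1:ℝ) ^ i * (c k) ^ (2 * i) / (Nat.factorial (2 * i)) := by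
      rw [show 2*(k+1)+2 = (2*k+2)+1+1 by ring, Finset.sum_range_succ, Finset.sum_range_succ, h0]
      have e1 : (-1:ℝ) ^ (2*k+2) = 1 := by rw [show 2*k+2 = 2*(k+1) by ring, pow_mul]; norm_num
      have e2 : (-1:ℝ) ^ (2*k+2+1) = -1 := by rw [pow_succ, e1]; norm_num
      rw [e1, e2, zero_add, one_mul, neg_one_mul, neg_div, ← sub_eq_add_neg]
      have ht := term_lt (hc k).1.1 (hsq k) (N := 2*(2*k+2)) (by omega)
      rw [show 2*(2*k+2)+2 = 2*(2*k+3) by ring] at ht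
      exact sub_pos.2 ht
    have hA := T_anti (k+1)
    have hz : (fun y : ℝ => ∑ i ∈ range (2 * (k+1) + 2), (-1:ℝ) ^ i * y ^ (2 * i) / (Nat.factorial (2 * i))) (c (k+1)) = 0 := h1
    exact (hA.lt_iff_gt (hmem (k+1)) (hmem k)).1 (by simpa [hz] using key)
  constructor
  · have h0 := (hc 0).2
    simp [Finset.sum_range_succ, Nat.factorial] at h0
    have hsq2 : c 0 ^ 2 = 2 := by nlinarith [h0]
    rw [← hsq2, Real.sqrt_sq (hc 0).1.1.le]
  · rw [tendsto_order]
    constructor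
    · intro a ha
      rcases le_or_gt a 0 with h | h
      · filter_upwards with k
        exact lt_of_le_of_lt h (hc k).1.1
      · have hcos : 0 < Real.cos a :=
          Real.cos_pos_of_mem_Ioo ⟨by linarith [Real.pi_pos], ha⟩
        have hs := (Real.hasSum_cos a).tendsto_sum_nat
        have hmono : Filter.Tendsto (fun k : ℕ => 2*k+2) atTop atTop :=
          tendsto_atTop_mono (fun k => by simp only [id_eq]; omega) tendsto_id
        have h2 := hs.comp hmono
        have hev := h2.eventually (eventually_gt_nhds hcos)
        filter_upwards [hev] with k hk
        have hA := T_anti k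
        have hz : (fun y : ℝ => ∑ i ∈ range (2 * k + 2), (-1:ℝ) ^ i * y ^ (2 * i) / (Nat.factorial (2 * i))) (c k) = 0 := (hc k).2
        have hamem : a ∈ Set.Icc (0:ℝ) 2 := ⟨h.le, le_trans ha.le hpi⟩
        have hk' : (0:ℝ) < ∑ i ∈ range (2 * k + 2), (-1:ℝ) ^ i * a ^ (2 * i) / (Nat.factorial (2 * i)) := hk
        exact (hA.lt_iff_gt (hmem k) hamem).1 (by simpa [hz] using hk')
    · intro b hb
      filter_upwards with k
      exact lt_trans (hc k).1.2 hb
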